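/- Let f = Ax² + Bxy + Cy² be a Zagier-reduced form of discriminant D = a² + (-1)^s · 4 > 0 with a > 2 and s ∈ {0,1}, and set z = (a+B)/2. Then z divides AC + (-1)^s, so gcd(A, z) = 1 and AC ≡ (-1)^{s+1} (mod z). -/

import Mathlib

theorem zagier_reduced_z_divides (A B C a : ℤ) (s : ℕ) (hs : s = 0 ∨ s = 1)
    (hA : 0 < A) (hC : 0 < C) (hB : A + C < B) (ha : 2 < a)
    (hdisc : B ^ 2 - 4 * A * C = a ^ 2 + (-1) ^ s * 4)
    (hD : 0 < a ^ 2 + (-1) ^ s * 4) :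
    (a + B) / 2 ∣ A * C + (-1) ^ s ∧ Int.gcd A ((a + B) / 2) = 1 ∧
      A * C ≡ (-1) ^ (s + 1) [ZMOD ((a + B) / 2)] := by
  have he : (-1 : ℤ) ^ s = 1 ∨ (-1 : ℤ) ^ s = -1 := by
    rcases hs with rfl | rfl <;> simp
  have hprod : (B - a) * (a + B) = 4 * (A * C + (-1) ^ s) := by
    linear_combination hdisc
  have h2 : (2 : ℤ) ∣ a + B := by
    rcases Int.even_or_odd (a + B) with h | h
    · exact h.two_dvd
    · exfalso
      have hodd : Odd ((B - a) * (a + B)) := by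
        refine Odd.mul ?_ h
        obtain ⟨k, hk⟩ := h
        exact ⟨k - a, by linarith⟩
      rw [hprod] at hodd
      rcases hodd with ⟨k, hk⟩
      omega
  obtain ⟨z, hz⟩ := h2
  obtain ⟨m, hm⟩ : (2 : ℤ) ∣ B - a := ⟨z - a, by linarith⟩
  have hzdef : (a + B) / 2 = z := by rw [hz]; exact Int.mul_ediv_cancel_left z two_ne_zero
  have hmz : m * z = A * C + (-1) ^ s := by
    have : 4 * (m * z) = 4 * (A * C + (-1) ^ s) := by
      rw [← hprod, hm, hz]; ring
    linarith
  have hdvd : (a + B) / 2 ∣ A * C + (-1) ^ s := by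
    rw [hzdef]; exact ⟨m, by linarith [hmz]⟩
  refine ⟨hdvd, ?_, ?_⟩
  · have hgA : (Int.gcd A z : ℤ) ∣ A := Int.gcd_dvd_left A z
    have hgz : (Int.gcd A z : ℤ) ∣ z := Int.gcd_dvd_right A z
    have hge : (Int.gcd A z : ℤ) ∣ (-1) ^ s := by
      have h1 : (Int.gcd A z : ℤ) ∣ A * C + (-1) ^ s := hgz.trans ⟨m, by linarith [hmz]⟩
      have h2 : (Int.gcd A z : ℤ) ∣ A * C := hgA.mul_right C
      simpa using (Int.dvd_sub h1 h2)
    have hg1 : (Int.gcd A z : ℤ) ∣ 1 := by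
      rcases he with h | h <;> rw [h] at hge
      · exact hge
      · exact dvd_neg.mp hge
    rw [hzdef]
    exact_mod_cast Int.eq_one_of_dvd_one (by positivity) hg1
  · rw [hzdef]
    refine Int.modEq_iff_dvd.mpr ⟨-m, ?_⟩
    have : (-1 : ℤ) ^ (s + 1) = -(-1) ^ s := by rw [pow_succ]; ring
    rw [this]; linarith [hmz]
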